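/- Let γ_1, ..., γ_T ∈ ℝ^K be stochastic vectors and let M ≥ 1 with M + 1 ≤ T. Then the minimal residual of the memory problem is at most the minimal residual of the memoryless problem: the infimum over column-stochastic matrices Λ̂ ∈ ℝ^{K×K^M} of Σ_{t=M+1}^{T} ‖γ_t − Λ̂ Ψ^M(γ_{t−1}, ..., γ_{t−M})‖_2^2 is less than or equal to the infimum over column-stochastic matrices Λ ∈ ℝ^{K×K} of Σ_{t=M+1}^{T} ‖γ_t − Λ γ_{t−1}‖_2^2. -/

import Mathlib

/-- For stochastic vectors `γ_1, ..., γ_T ∈ ℝ^K` and `M ≥ 1` with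
`M + 1 ≤ T`, the minimal residual (infimum of the sum of squared Euclidean errors)
of the memory (mSPA) problem over column-stochastic `Λ̂ ∈ ℝ^{K×K^M}` is at most the
minimal residual of the memoryless (SPA II) problem over column-stochastic
`Λ ∈ ℝ^{K×K}`. -/
theorem stmt_4 (K M T : ℕ) (hM : 1 ≤ M) (hMT : M + 1 ≤ T)
    (γ : ℕ → Fin K → ℝ)
    (hγ : ∀ t, 1 ≤ t → t ≤ T → (∀ i, 0 ≤ γ t i) ∧ ∑ i, γ t i = 1) :
    sInf {r : ℝ | ∃ Λhat : Matrix (Fin K) (Fin M → Fin K) ℝ,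
        (∀ i j, 0 ≤ Λhat i j) ∧ (∀ j, ∑ i, Λhat i j = 1) ∧
        r = ∑ t ∈ Finset.Icc (M + 1) T, ∑ i,
            (γ t i - Λhat.mulVec
              (fun idx : Fin M → Fin K => ∏ s : Fin M, γ (t - 1 - s.val) (idx s)) i) ^ 2}
      ≤ sInf {r : ℝ | ∃ Λ : Matrix (Fin K) (Fin K) ℝ,
        (∀ i j, 0 ≤ Λ i j) ∧ (∀ j, ∑ i, Λ i j = 1) ∧
        r = ∑ t ∈ Finset.Icc (M + 1) T, ∑ i, (γ t i - Λ.mulVec (γ (t - 1)) i) ^ 2} := by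
  apply csInf_le_csInf
  · -- bounded below by 0
    refine ⟨0, ?_⟩
    rintro r ⟨Λhat, -, -, rfl⟩
    positivity
  · -- RHS nonempty: take Λ = identity-like matrix
    refine ⟨_, ⟨Matrix.of fun i j => if i = j then (1:ℝ) else 0, ?_, ?_, rfl⟩⟩
    · intro i j; dsimp; split <;> norm_num
    · intro j; simp
  · -- inclusion
    rintro r ⟨Λ, hpos, hcol, rfl⟩
    set z : Fin M := ⟨0, hM⟩ with hz
    refine ⟨Matrix.of fun i idx => Λ i (idx z), fun i idx => hpos i (idx z),
      fun idx => hcol (idx z), ?_⟩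
    refine Finset.sum_congr rfl fun t ht => ?_
    rw [Finset.mem_Icc] at ht
    refine Finset.sum_congr rfl fun i _ => ?_
    congr 1
    congr 1
    -- show Λ.mulVec (γ (t-1)) i = Λhat.mulVec Ψ i
    have key : ∀ s : Fin M, ∑ j, γ (t - 1 - s.val) j = 1 := by
      intro s
      refine (hγ _ ?_ ?_).2 <;> omega
    simp only [Matrix.mulVec, dotProduct, Matrix.of_apply]
    have step : ∀ idx : Fin M → Fin K,
        Λ i (idx z) * ∏ s : Fin M, γ (t - 1 - s.val) (idx s)
          = ∏ s : Fin M, (if s = z then Λ i (idx s) * γ (t - 1 - s.val) (idx s)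
              else γ (t - 1 - s.val) (idx s)) := by
      intro idx
      rw [Finset.prod_eq_mul_prod_sdiff_singleton_of_mem (Finset.mem_univ z),
        Finset.prod_eq_mul_prod_sdiff_singleton_of_mem (Finset.mem_univ z)
          (fun s => if s = z then Λ i (idx s) * γ (t - 1 - s.val) (idx s)
              else γ (t - 1 - s.val) (idx s)),
        if_pos rfl, ← mul_assoc]
      congr 1
      refine Finset.prod_congr rfl fun s hs => ?_
      rw [if_neg (by simpa using (Finset.mem_sdiff.mp hs).2)]
    rw [Finset.sum_congr rfl fun idx _ => step idx]
    rw [← Fintype.prod_sum (fun (s : Fin M) (j : Fin K) => if s = z then Λ i j * γ (t - 1 - s.val) j else γ (t - 1 - s.val) j),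
      Finset.prod_eq_mul_prod_sdiff_singleton_of_mem (Finset.mem_univ z)]
    have h1 : ∑ j, (if z = z then Λ i j * γ (t - 1 - z.val) j else γ (t - 1 - z.val) j)
        = ∑ j, Λ i j * γ (t - 1) j := by
      simp [hz]
    rw [h1]
    have h2 : ∏ s ∈ Finset.univ \ {z},
        ∑ j, (if s = z then Λ i j * γ (t - 1 - s.val) j else γ (t - 1 - s.val) j) = 1 := by
      refine Finset.prod_eq_one fun s hs => ?_
      rw [Finset.sum_congr rfl fun j _ =>
        if_neg (by simpa using (Finset.mem_sdiff.mp hs).2)]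
      exact key s
    rw [h2, mul_one]
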